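/- For all real numbers x, y, k with k > 0 and x ≠ y, the ratio (√(x² + k) − √(y² + k))² / (x − y)² is at most 1 − 1/√((x²/k + 1)(y²/k + 1)). -/
import Mathlib


theorem stmt_0 (x y k : ℝ) (hk : 0 < k) (hxy : x ≠ y) :
    (Real.sqrt (x ^ 2 + k) - Real.sqrt (y ^ 2 + k)) ^ 2 / (x - y) ^ 2 ≤
      1 - 1 / Real.sqrt ((x ^ 2 / k + 1) * (y ^ 2 / k + 1)) := by
  set a := Real.sqrt (x ^ 2 + k) with ha
  set b := Real.sqrt (y ^ 2 + k) with hb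
  have hxk : (0:ℝ) < x ^ 2 + k := by positivity
  have hyk : (0:ℝ) < y ^ 2 + k := by positivity
  have ha2 : a ^ 2 = x ^ 2 + k := Real.sq_sqrt hxk.le
  have hb2 : b ^ 2 = y ^ 2 + k := Real.sq_sqrt hyk.le
  have hapos : 0 < a := Real.sqrt_pos.2 hxk
  have hbpos : 0 < b := Real.sqrt_pos.2 hyk
  have hspos : 0 < a * b := mul_pos hapos hbpos
  have hs2 : (a * b) ^ 2 = (x ^ 2 + k) * (y ^ 2 + k) := by
    rw [mul_pow, ha2, hb2]
  have hsqrt : Real.sqrt ((x ^ 2 / k + 1) * (y ^ 2 / k + 1)) = a * b / k := by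
    have h1 : (x ^ 2 / k + 1) * (y ^ 2 / k + 1) = (a * b / k) ^ 2 := by
      field_simp
      nlinarith [hs2]
    rw [h1, Real.sqrt_sq (by positivity)]
  rw [hsqrt]
  have hxy2 : (0:ℝ) < (x - y) ^ 2 := by
    have : x - y ≠ 0 := sub_ne_zero.2 hxy
    positivity
  have h1 : 1 - 1 / (a * b / k) = (a * b - k) / (a * b) := by
    field_simp
  rw [h1, div_le_div_iff₀ hxy2 hspos]
  have hsub : (a - b) ^ 2 = x ^ 2 + y ^ 2 + 2 * k - 2 * (a * b) := by
    have : (a - b) ^ 2 = a ^ 2 + b ^ 2 - 2 * (a * b) := by ring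
    rw [this, ha2, hb2]; ring
  rw [hsub]
  nlinarith [sq_nonneg (a * b - (x * y + k)), hs2, hspos]
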